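/- arXiv:2509.20145 — 5 statements merged into one kernel-verified Lean document; each statement's English description precedes it below -/
import Mathlib

section
/- In the one-step preventive replacement setting, the expected cost of replacing now is strictly smaller than the expected cost of the do-nothing branch, i.e. c_{PR@tk}(r) < c_{PR@tk+1}(r), if and only if ECTR·Δt < p_F·( c_c − c_p + ECTR·(Δt − μ) ), where μ = E[RUL | RUL ≤ Δt]. In particular, the decision criterion does not depend on the time horizon r. -/
open MeasureTheory

/-- One-step preventive replacement: replacing now is strictly cheaper than the
do-nothing branch iff `ECTR·Δt < p_F·(c_c − c_p + ECTR·(Δt − μ))`, where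
`μ = E[RUL | RUL ≤ Δt]`; in particular the criterion does not depend on the
time horizon `r`. -/
theorem doa_replacement_criterion
    {Ω : Type*} [MeasurableSpace Ω] (P : Measure Ω) [IsProbabilityMeasure P]
    (RUL : Ω → ℝ) (hRUL_meas : Measurable RUL) (hRUL_nonneg : ∀ ω, 0 ≤ RUL ω)
    (hRUL_int : Integrable RUL P)
    (Δt c_p c_c ECTR : ℝ) (hΔt : 0 < Δt)
    (p_F : ℝ) (hp_F : p_F = (P {ω | RUL ω ≤ Δt}).toReal) (hp_F_pos : 0 < p_F)
    (μ : ℝ) (hμ : μ = (∫ ω in {ω | RUL ω ≤ Δt}, RUL ω ∂P) / p_F) :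
    ∀ r : ℝ,
      c_p + ECTR * r <
          p_F * (c_c + ECTR * (r - μ)) + (1 - p_F) * (c_p + ECTR * (r - Δt)) ↔
        ECTR * Δt < p_F * (c_c - c_p + ECTR * (Δt - μ)) := by
  intro r
  constructor <;> intro h <;> nlinarith [h]
end

section
/- In the one-step preventive replacement setting, the difference of the two branch costs satisfies, for every time horizon r, c_{PR@tk+1}(r) − c_{PR@tk}(r) = p_F·(c_c − c_p) − ECTR·( E[RUL·1_{RUL ≤ Δt}] + (1 − p_F)·Δt ); in particular this difference is independent of r. -/
open MeasureTheory

/-- One-step preventive replacement: the difference of the two branch costs equals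
`p_F·(c_c − c_p) − ECTR·(E[RUL·1_{RUL ≤ Δt}] + (1 − p_F)·Δt)` for every time
horizon `r`; in particular it is independent of `r`. -/
theorem doa_replacement_cost_difference
    {Ω : Type*} [MeasurableSpace Ω] (P : Measure Ω) [IsProbabilityMeasure P]
    (RUL : Ω → ℝ) (hRUL_meas : Measurable RUL) (hRUL_nonneg : ∀ ω, 0 ≤ RUL ω)
    (hRUL_int : Integrable RUL P)
    (Δt c_p c_c ECTR : ℝ) (hΔt : 0 < Δt)
    (p_F : ℝ) (hp_F : p_F = (P {ω | RUL ω ≤ Δt}).toReal) (hp_F_pos : 0 < p_F)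
    (μ : ℝ) (hμ : μ = (∫ ω in {ω | RUL ω ≤ Δt}, RUL ω ∂P) / p_F) :
    ∀ r : ℝ,
      (p_F * (c_c + ECTR * (r - μ)) + (1 - p_F) * (c_p + ECTR * (r - Δt))) -
          (c_p + ECTR * r) =
        p_F * (c_c - c_p) -
          ECTR * ((∫ ω in {ω | RUL ω ≤ Δt}, RUL ω ∂P) + (1 - p_F) * Δt) := by
  intro r
  have h : p_F * μ = ∫ ω in {ω | RUL ω ≤ Δt}, RUL ω ∂P := by
    rw [hμ]; field_simp
  rw [← h]; ring
end

section
/- In the one-step preventive ordering setting, the expected cost of ordering now is strictly smaller than the expected cost of ordering at the next decision time, i.e. c_{O@tk}(r) < c_{O@tk+1}(r), if and only if 0 < P(RUL ≤ l)·Δt·(c_unav + c_inv − ECTR) − c_inv·Δt + P(l < RUL ≤ l + Δt)·(c_unav + c_inv − ECTR)·( l + Δt − E[RUL | l < RUL ≤ l + Δt] ). In particular, the decision criterion does not depend on the time horizon r. -/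
open MeasureTheory

/-- One-step preventive ordering: ordering now is strictly cheaper than ordering
at the next decision time iff
`0 < P(RUL ≤ l)·Δt·(c_unav + c_inv − ECTR) − c_inv·Δt
   + P(l < RUL ≤ l+Δt)·(c_unav + c_inv − ECTR)·(l + Δt − E[RUL | l < RUL ≤ l+Δt])`;
in particular the criterion does not depend on the time horizon `r`. -/
theorem doa_ordering_criterion
    {Ω : Type*} [MeasurableSpace Ω] (P : Measure Ω) [IsProbabilityMeasure P]
    (RUL : Ω → ℝ) (hRUL_meas : Measurable RUL) (hRUL_nonneg : ∀ ω, 0 ≤ RUL ω)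
    (hRUL_int : Integrable RUL P)
    (Δt l c_inv c_unav ECTR : ℝ) (hΔt : 0 < Δt) (hl : 0 < l)
    (p_le_l : ℝ) (hp_le_l : p_le_l = (P {ω | RUL ω ≤ l}).toReal)
    (p_gt_l : ℝ) (hp_gt_l : p_gt_l = (P {ω | l < RUL ω}).toReal)
    (p_le_lΔ : ℝ) (hp_le_lΔ : p_le_lΔ = (P {ω | RUL ω ≤ l + Δt}).toReal)
    (p_gt_lΔ : ℝ) (hp_gt_lΔ : p_gt_lΔ = (P {ω | l + Δt < RUL ω}).toReal)
    (p_mid : ℝ) (hp_mid : p_mid = (P {ω | l < RUL ω ∧ RUL ω ≤ l + Δt}).toReal)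
    (hp_le_l_pos : 0 < p_le_l) (hp_le_lΔ_lt_one : p_le_lΔ < 1) (hp_mid_pos : 0 < p_mid)
    (E_le_l : ℝ) (hE_le_l : E_le_l = (∫ ω in {ω | RUL ω ≤ l}, RUL ω ∂P) / p_le_l)
    (E_gt_l : ℝ) (hE_gt_l : E_gt_l = (∫ ω in {ω | l < RUL ω}, RUL ω ∂P) / p_gt_l)
    (E_le_lΔ : ℝ)
    (hE_le_lΔ : E_le_lΔ = (∫ ω in {ω | RUL ω ≤ l + Δt}, RUL ω ∂P) / p_le_lΔ)
    (E_gt_lΔ : ℝ)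
    (hE_gt_lΔ : E_gt_lΔ = (∫ ω in {ω | l + Δt < RUL ω}, RUL ω ∂P) / p_gt_lΔ)
    (E_mid : ℝ)
    (hE_mid : E_mid = (∫ ω in {ω | l < RUL ω ∧ RUL ω ≤ l + Δt}, RUL ω ∂P) / p_mid) :
    ∀ r : ℝ,
      p_le_l * ((l - E_le_l) * c_unav + ECTR * (r - l)) +
            p_gt_l * ((E_gt_l - l) * c_inv + ECTR * (r - E_gt_l)) <
          p_le_lΔ * ((l + Δt - E_le_lΔ) * c_unav + ECTR * (r - l - Δt)) +
            p_gt_lΔ * ((E_gt_lΔ - l - Δt) * c_inv + ECTR * (r - E_gt_lΔ)) ↔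
        0 < p_le_l * Δt * (c_unav + c_inv - ECTR) - c_inv * Δt +
              p_mid * (c_unav + c_inv - ECTR) * (l + Δt - E_mid) := by
  intro r
  have mA : MeasurableSet {ω | RUL ω ≤ l} := hRUL_meas measurableSet_Iic
  have mM : MeasurableSet {ω | l < RUL ω ∧ RUL ω ≤ l + Δt} := hRUL_meas measurableSet_Ioc
  have mB : MeasurableSet {ω | l + Δt < RUL ω} := hRUL_meas measurableSet_Ioi
  -- set decompositions
  have hU1 : {ω | RUL ω ≤ l + Δt} =
      {ω | RUL ω ≤ l} ∪ {ω | l < RUL ω ∧ RUL ω ≤ l + Δt} := by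
    ext ω
    simp only [Set.mem_union, Set.mem_setOf_eq]
    constructor
    · intro h
      rcases le_or_gt (RUL ω) l with h' | h'
      · exact Or.inl h'
      · exact Or.inr ⟨h', h⟩
    · rintro (h | ⟨_, h⟩) <;> linarith
  have hU2 : {ω | l < RUL ω} =
      {ω | l < RUL ω ∧ RUL ω ≤ l + Δt} ∪ {ω | l + Δt < RUL ω} := by
    ext ω
    simp only [Set.mem_union, Set.mem_setOf_eq]
    constructor
    · intro h
      rcases le_or_gt (RUL ω) (l + Δt) with h' | h'
      · exact Or.inl ⟨h, h'⟩
      · exact Or.inr h'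
    · rintro (⟨h, _⟩ | h) <;> linarith
  have hD1 : Disjoint {ω | RUL ω ≤ l} {ω | l < RUL ω ∧ RUL ω ≤ l + Δt} := by
    rw [Set.disjoint_left]
    intro ω h1 h2
    exact absurd h2.1 (not_lt.mpr h1)
  have hD2 : Disjoint {ω | l < RUL ω ∧ RUL ω ≤ l + Δt} {ω | l + Δt < RUL ω} := by
    rw [Set.disjoint_left]
    intro ω h1 h2
    exact absurd h2 (not_lt.mpr h1.2)
  have hC1 : {ω | RUL ω ≤ l}ᶜ = {ω | l < RUL ω} := by
    ext ω; simp [not_le]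
  have hC2 : {ω | RUL ω ≤ l + Δt}ᶜ = {ω | l + Δt < RUL ω} := by
    ext ω; simp [not_le]
  -- probability identities
  have hp1 : p_le_lΔ = p_le_l + p_mid := by
    rw [hp_le_lΔ, hp_le_l, hp_mid, hU1, measure_union hD1 mM,
      ENNReal.toReal_add (measure_ne_top P _) (measure_ne_top P _)]
  have hp2 : p_gt_l = p_mid + p_gt_lΔ := by
    rw [hp_gt_l, hp_mid, hp_gt_lΔ, hU2, measure_union hD2 mB,
      ENNReal.toReal_add (measure_ne_top P _) (measure_ne_top P _)]
  have hp4 : p_le_lΔ + p_gt_lΔ = 1 := by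
    have mAΔ : MeasurableSet {ω | RUL ω ≤ l + Δt} := hRUL_meas measurableSet_Iic
    have h := measure_add_measure_compl (μ := P) mAΔ
    rw [hC2, measure_univ] at h
    rw [hp_le_lΔ, hp_gt_lΔ, ← ENNReal.toReal_one, ← h,
      ENNReal.toReal_add (measure_ne_top P _) (measure_ne_top P _)]
  have hp3 : p_le_l + p_gt_l = 1 := by
    have h := measure_add_measure_compl (μ := P) mA
    rw [hC1, measure_univ] at h
    rw [hp_le_l, hp_gt_l, ← ENNReal.toReal_one, ← h,
      ENNReal.toReal_add (measure_ne_top P _) (measure_ne_top P _)]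
  -- integral identities
  have hi1 : (∫ ω in {ω | RUL ω ≤ l + Δt}, RUL ω ∂P) =
      (∫ ω in {ω | RUL ω ≤ l}, RUL ω ∂P) +
      (∫ ω in {ω | l < RUL ω ∧ RUL ω ≤ l + Δt}, RUL ω ∂P) := by
    rw [hU1]
    exact setIntegral_union hD1 mM hRUL_int.integrableOn hRUL_int.integrableOn
  have hi2 : (∫ ω in {ω | l < RUL ω}, RUL ω ∂P) =
      (∫ ω in {ω | l < RUL ω ∧ RUL ω ≤ l + Δt}, RUL ω ∂P) +
      (∫ ω in {ω | l + Δt < RUL ω}, RUL ω ∂P) := by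
    rw [hU2]
    exact setIntegral_union hD2 mB hRUL_int.integrableOn hRUL_int.integrableOn
  -- positivity
  have hGnn : 0 ≤ p_gt_lΔ := by rw [hp_gt_lΔ]; exact ENNReal.toReal_nonneg
  have hGpos : 0 < p_gt_lΔ := by linarith
  have hApos : 0 < p_le_lΔ := by linarith
  have hgpos : 0 < p_gt_l := by linarith
  -- product identities  p * E = ∫
  have hX1 : p_le_l * E_le_l = ∫ ω in {ω | RUL ω ≤ l}, RUL ω ∂P := by
    rw [hE_le_l]; field_simp
  have hX2 : p_gt_l * E_gt_l = ∫ ω in {ω | l < RUL ω}, RUL ω ∂P := by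
    rw [hE_gt_l]; field_simp
  have hX3 : p_le_lΔ * E_le_lΔ = ∫ ω in {ω | RUL ω ≤ l + Δt}, RUL ω ∂P := by
    rw [hE_le_lΔ]; field_simp
  have hX4 : p_gt_lΔ * E_gt_lΔ = ∫ ω in {ω | l + Δt < RUL ω}, RUL ω ∂P := by
    rw [hE_gt_lΔ]; field_simp
  have hX5 : p_mid * E_mid = ∫ ω in {ω | l < RUL ω ∧ RUL ω ≤ l + Δt}, RUL ω ∂P := by
    rw [hE_mid]; field_simp
  have key :
      (p_le_lΔ * ((l + Δt - E_le_lΔ) * c_unav + ECTR * (r - l - Δt)) +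
        p_gt_lΔ * ((E_gt_lΔ - l - Δt) * c_inv + ECTR * (r - E_gt_lΔ))) -
      (p_le_l * ((l - E_le_l) * c_unav + ECTR * (r - l)) +
        p_gt_l * ((E_gt_l - l) * c_inv + ECTR * (r - E_gt_l))) =
      p_le_l * Δt * (c_unav + c_inv - ECTR) - c_inv * Δt +
        p_mid * (c_unav + c_inv - ECTR) * (l + Δt - E_mid) := by
    linear_combination
      ((l + Δt) * (c_unav - ECTR) + ECTR * r + c_inv * Δt) * hp1 +
      (l * c_inv - ECTR * r) * hp2 + (-(c_inv * Δt)) * hp4 +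
      c_unav * hX1 + (ECTR - c_inv) * hX2 + (-c_unav) * hX3 +
      (c_inv - ECTR) * hX4 + (c_unav + c_inv - ECTR) * hX5 +
      (-c_unav) * hi1 + (ECTR - c_inv) * hi2
  constructor <;> intro h <;> linarith
end

section
/- In the one-step preventive ordering setting, the difference of the two total expected costs satisfies, for every time horizon r, c_{O@tk+1}(r) − c_{O@tk}(r) = P(RUL ≤ l)·Δt·(c_unav + c_inv − ECTR) − c_inv·Δt + (c_unav + c_inv − ECTR)·( P(l < RUL ≤ l + Δt)·(l + Δt) − E[RUL·1_{l < RUL ≤ l + Δt}] ); in particular this difference is independent of r. -/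
open MeasureTheory

/-- One-step preventive ordering: the difference of the two total expected costs is
independent of the time horizon `r` and equals
`P(RUL ≤ l)·Δt·(c_unav + c_inv − ECTR) − c_inv·Δt
  + (c_unav + c_inv − ECTR)·(P(l < RUL ≤ l+Δt)·(l+Δt) − E[RUL·1_{l < RUL ≤ l+Δt}])`. -/
theorem doa_ordering_cost_difference
    {Ω : Type*} [MeasurableSpace Ω] (P : Measure Ω) [IsProbabilityMeasure P]
    (RUL : Ω → ℝ) (hRUL_meas : Measurable RUL) (hRUL_nonneg : ∀ ω, 0 ≤ RUL ω)
    (hRUL_int : Integrable RUL P)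
    (Δt l c_inv c_unav ECTR : ℝ) (hΔt : 0 < Δt) (hl : 0 < l)
    (p_le_l : ℝ) (hp_le_l : p_le_l = (P {ω | RUL ω ≤ l}).toReal)
    (p_gt_l : ℝ) (hp_gt_l : p_gt_l = (P {ω | l < RUL ω}).toReal)
    (p_le_lΔ : ℝ) (hp_le_lΔ : p_le_lΔ = (P {ω | RUL ω ≤ l + Δt}).toReal)
    (p_gt_lΔ : ℝ) (hp_gt_lΔ : p_gt_lΔ = (P {ω | l + Δt < RUL ω}).toReal)
    (p_mid : ℝ) (hp_mid : p_mid = (P {ω | l < RUL ω ∧ RUL ω ≤ l + Δt}).toReal)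
    (hp_le_l_pos : 0 < p_le_l) (hp_le_lΔ_lt_one : p_le_lΔ < 1) (hp_mid_pos : 0 < p_mid)
    (E_le_l : ℝ) (hE_le_l : E_le_l = (∫ ω in {ω | RUL ω ≤ l}, RUL ω ∂P) / p_le_l)
    (E_gt_l : ℝ) (hE_gt_l : E_gt_l = (∫ ω in {ω | l < RUL ω}, RUL ω ∂P) / p_gt_l)
    (E_le_lΔ : ℝ)
    (hE_le_lΔ : E_le_lΔ = (∫ ω in {ω | RUL ω ≤ l + Δt}, RUL ω ∂P) / p_le_lΔ)
    (E_gt_lΔ : ℝ)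
    (hE_gt_lΔ : E_gt_lΔ = (∫ ω in {ω | l + Δt < RUL ω}, RUL ω ∂P) / p_gt_lΔ) :
    ∀ r : ℝ,
      (p_le_lΔ * ((l + Δt - E_le_lΔ) * c_unav + ECTR * (r - l - Δt)) +
            p_gt_lΔ * ((E_gt_lΔ - l - Δt) * c_inv + ECTR * (r - E_gt_lΔ))) -
          (p_le_l * ((l - E_le_l) * c_unav + ECTR * (r - l)) +
            p_gt_l * ((E_gt_l - l) * c_inv + ECTR * (r - E_gt_l))) =
        p_le_l * Δt * (c_unav + c_inv - ECTR) - c_inv * Δt +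
          (c_unav + c_inv - ECTR) *
            (p_mid * (l + Δt) -
              ∫ ω in {ω | l < RUL ω ∧ RUL ω ≤ l + Δt}, RUL ω ∂P) :=  by
  intro r
  -- sets
  set A : Set Ω := {ω | RUL ω ≤ l} with hA
  set M : Set Ω := {ω | l < RUL ω ∧ RUL ω ≤ l + Δt} with hM
  have hmA : MeasurableSet A := measurableSet_le hRUL_meas measurable_const
  have hmB : MeasurableSet {ω | RUL ω ≤ l + Δt} :=
    measurableSet_le hRUL_meas measurable_const
  have hmGl : MeasurableSet {ω | l < RUL ω} := measurableSet_lt measurable_const hRUL_meas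
  have hmGB : MeasurableSet {ω | l + Δt < RUL ω} := measurableSet_lt measurable_const hRUL_meas
  have hmM : MeasurableSet M := hmGl.inter hmB
  have hdisj : Disjoint A M := by
    rw [Set.disjoint_left]
    rintro ω (h1 : RUL ω ≤ l) ⟨h2, _⟩
    exact absurd h1 (not_le.mpr h2)
  have hdisj2 : Disjoint M {ω | l + Δt < RUL ω} := by
    rw [Set.disjoint_left]
    rintro ω ⟨_, h2⟩ (h3 : l + Δt < RUL ω)
    exact absurd h2 (not_le.mpr h3)
  have hAM : A ∪ M = {ω | RUL ω ≤ l + Δt} := by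
    ext ω
    simp only [Set.mem_union, hA, hM, Set.mem_setOf_eq]
    constructor
    · rintro (h | ⟨_, h⟩)
      · linarith
      · exact h
    · intro h
      rcases le_or_gt (RUL ω) l with h1 | h1
      · exact Or.inl h1
      · exact Or.inr ⟨h1, h⟩
  have hMG : M ∪ {ω | l + Δt < RUL ω} = {ω | l < RUL ω} := by
    ext ω
    simp only [Set.mem_union, hM, Set.mem_setOf_eq]
    constructor
    · rintro (⟨h, _⟩ | h)
      · exact h
      · linarith
    · intro h
      rcases le_or_gt (RUL ω) (l + Δt) with h1 | h1
      · exact Or.inl ⟨h, h1⟩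
      · exact Or.inr h1
  -- probabilities split
  have hpB : p_le_lΔ = p_le_l + p_mid := by
    rw [hp_le_lΔ, hp_le_l, hp_mid, ← hAM, measure_union hdisj hmM,
      ENNReal.toReal_add (measure_ne_top P A) (measure_ne_top P M)]
  have hpGl : p_gt_l = p_mid + p_gt_lΔ := by
    rw [hp_gt_l, hp_mid, hp_gt_lΔ, ← hMG, measure_union hdisj2 hmGB,
      ENNReal.toReal_add (measure_ne_top P M) (measure_ne_top P _)]
  have hcomplA : Aᶜ = {ω | l < RUL ω} := by
    ext ω; simp [hA, not_le]
  have hpone : p_le_l + p_gt_l = 1 := by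
    rw [hp_le_l, hp_gt_l, ← hcomplA,
      ← ENNReal.toReal_add (measure_ne_top P A) (measure_ne_top P _),
      measure_add_measure_compl hmA]
    simp
  -- integrals split
  have hIB : (∫ ω in {ω | RUL ω ≤ l + Δt}, RUL ω ∂P)
      = (∫ ω in A, RUL ω ∂P) + ∫ ω in M, RUL ω ∂P := by
    rw [← hAM, setIntegral_union hdisj hmM hRUL_int.integrableOn hRUL_int.integrableOn]
  have hIG : (∫ ω in {ω | l < RUL ω}, RUL ω ∂P)
      = (∫ ω in M, RUL ω ∂P) + ∫ ω in {ω | l + Δt < RUL ω}, RUL ω ∂P := by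
    rw [← hMG, setIntegral_union hdisj2 hmGB hRUL_int.integrableOn hRUL_int.integrableOn]
  -- positivity
  have hpGB_pos : 0 < p_gt_lΔ := by
    have : p_le_lΔ + p_gt_lΔ = 1 := by
      rw [hpB, hpGl] at *
      linarith [hpone]
    linarith
  have hpGl_pos : 0 < p_gt_l := by linarith [hpGl, hpGB_pos, hp_mid_pos]
  have hpBpos : 0 < p_le_lΔ := by linarith [hpB]
  -- substitute and finish
  rw [hE_le_l, hE_gt_l, hE_le_lΔ, hE_gt_lΔ, hIB, hIG, hpB, hpGl]
  have hone : p_le_l + p_mid + p_gt_lΔ = 1 := by rw [hpGl] at hpone; linarith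
  rw [show p_gt_lΔ = 1 - p_le_l - p_mid by linarith]
  have h1 : p_le_l ≠ 0 := ne_of_gt hp_le_l_pos
  have h2 : p_mid + (1 - p_le_l - p_mid) ≠ 0 := by
    intro h; nlinarith [hpGB_pos, hone]
  have h3 : p_le_l + p_mid ≠ 0 := by positivity
  have h4 : (1 : ℝ) - p_le_l - p_mid ≠ 0 := by intro h; nlinarith [hpGB_pos, hone]
  have h5 : (1 : ℝ) - p_le_l ≠ 0 := by intro h; nlinarith [hpGB_pos, hp_mid_pos, hone]
  field_simp
  ring
end

section
/- Let Δt > 0 and c_inv, c_unav > 0 be real numbers, and let T be a random variable uniformly distributed on [0, Δt]. Then the expected minimal per-cycle ordering cost satisfies E[ min( T·c_inv, (Δt − T)·c_unav ) ] = (1/Δt)·∫_0^{Δt} min( t·c_inv, (Δt − t)·c_unav ) dt = ( c_inv·c_unav / (2·(c_inv + c_unav)) )·Δt. -/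
open MeasureTheory

/-- For a failure phase `T` uniformly distributed on `[0, Δt]`, the expected minimal
per-cycle ordering cost equals `(1/Δt)·∫_0^{Δt} min(t·c_inv, (Δt−t)·c_unav) dt`,
which equals `(c_inv·c_unav / (2·(c_inv + c_unav)))·Δt`. -/
theorem expected_perfect_ordering_cost
    {Ω : Type*} [MeasurableSpace Ω] (P : Measure Ω) [IsProbabilityMeasure P]
    (Δt c_inv c_unav : ℝ) (hΔt : 0 < Δt) (hci : 0 < c_inv) (hcu : 0 < c_unav)
    (T : Ω → ℝ) (hT : pdf.IsUniform T (Set.Icc 0 Δt) P) :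
    (∫ ω, min (T ω * c_inv) ((Δt - T ω) * c_unav) ∂P) =
        (1 / Δt) * ∫ t in (0 : ℝ)..Δt, min (t * c_inv) ((Δt - t) * c_unav) ∧
      (1 / Δt) * (∫ t in (0 : ℝ)..Δt, min (t * c_inv) ((Δt - t) * c_unav)) =
        (c_inv * c_unav / (2 * (c_inv + c_unav))) * Δt := by
  set f : ℝ → ℝ := fun t => min (t * c_inv) ((Δt - t) * c_unav) with hf
  have hcont : Continuous f := by
    apply Continuous.min <;> continuity
  have hvol : volume (Set.Icc (0:ℝ) Δt) = ENNReal.ofReal Δt := by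
    simp [Real.volume_Icc]
  have hns : volume (Set.Icc (0:ℝ) Δt) ≠ 0 := by
    simp [hvol, ENNReal.ofReal_eq_zero, not_le, hΔt]
  have hnt : volume (Set.Icc (0:ℝ) Δt) ≠ ⊤ := by simp [hvol]
  have hTm : AEMeasurable T P := hT.aemeasurable hns hnt
  -- first part
  have h1 : (∫ ω, f (T ω) ∂P) = (1 / Δt) * ∫ t in (0:ℝ)..Δt, f t := by
    have hmap : Measure.map T P = (volume (Set.Icc (0:ℝ) Δt))⁻¹ • volume.restrict (Set.Icc 0 Δt) := hT
    calc (∫ ω, f (T ω) ∂P) = ∫ x, f x ∂(Measure.map T P) :=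
          (integral_map hTm hcont.aestronglyMeasurable).symm
      _ = (volume (Set.Icc (0:ℝ) Δt))⁻¹.toReal • ∫ x in Set.Icc (0:ℝ) Δt, f x := by
          rw [hmap, integral_smul_measure]
      _ = (1 / Δt) * ∫ t in (0:ℝ)..Δt, f t := by
          rw [intervalIntegral.integral_of_le hΔt.le,
            ← integral_Icc_eq_integral_Ioc]
          simp [hvol, ENNReal.toReal_inv, ENNReal.toReal_ofReal hΔt.le, one_div, smul_eq_mul]
  refine ⟨h1, ?_⟩
  -- second part: compute the integral
  set m : ℝ := Δt * c_unav / (c_inv + c_unav) with hm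
  have hsum : 0 < c_inv + c_unav := by linarith
  have hm0 : 0 ≤ m := by positivity
  have hmΔ : m ≤ Δt := by
    rw [hm, div_le_iff₀ hsum]
    nlinarith
  have hint1 : ∫ t in (0:ℝ)..m, f t = ∫ t in (0:ℝ)..m, t * c_inv := by
    apply intervalIntegral.integral_congr
    intro t ht
    rw [Set.uIcc_of_le hm0] at ht
    have : t * c_inv ≤ (Δt - t) * c_unav := by
      have h1 : t ≤ m := ht.2
      rw [hm] at h1
      have := (le_div_iff₀ hsum).mp h1
      nlinarith
    simp [hf, min_eq_left this]
  have hint2 : ∫ t in m..Δt, f t = ∫ t in m..Δt, (Δt - t) * c_unav := by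
    apply intervalIntegral.integral_congr
    intro t ht
    rw [Set.uIcc_of_le hmΔ] at ht
    have : (Δt - t) * c_unav ≤ t * c_inv := by
      have h1 : m ≤ t := ht.1
      rw [hm] at h1
      have := (div_le_iff₀ hsum).mp h1
      nlinarith
    simp [hf, min_eq_right this]
  have hsplit : ∫ t in (0:ℝ)..Δt, f t = (∫ t in (0:ℝ)..m, f t) + ∫ t in m..Δt, f t := by
    rw [intervalIntegral.integral_add_adjacent_intervals] <;>
      exact (hcont.intervalIntegrable _ _)
  have hI1 : ∫ t in (0:ℝ)..m, t * c_inv = c_inv * m ^ 2 / 2 := by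
    rw [intervalIntegral.integral_mul_const, integral_id]
    ring
  have hI2 : ∫ t in m..Δt, (Δt - t) * c_unav = c_unav * (Δt - m) ^ 2 / 2 := by
    rw [intervalIntegral.integral_mul_const]
    have : ∫ t in m..Δt, (Δt - t) = Δt * (Δt - m) - (Δt ^ 2 / 2 - m ^ 2 / 2) := by
      rw [intervalIntegral.integral_sub intervalIntegrable_const
        (intervalIntegral.intervalIntegrable_id), intervalIntegral.integral_const, integral_id]
      simp [smul_eq_mul]
      ring
    rw [this]; ring
  rw [hsplit, hint1, hint2, hI1, hI2, hm]
  field_simp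
  ring
end
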